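/- If λ ≥ 2μZ_f², then for any minimizer α* of the sketched program, the approximate solution x̃ = −λ⁻¹Aᵀ∇f(ASα*) satisfies ‖x̃ − x*‖₂ ≤ √(μ/(2λ)) · ‖P_S^⊥ Aᵀ‖₂ · ‖x*‖₂, where ‖·‖₂ on matrices denotes the spectral norm. -/

import Mathlib

open Matrix Finset Real Set

noncomputable section

namespace Sketch

/-- The ℓ2 norm of a vector in `Fin k → ℝ`. -/
def norm2 {k : ℕ} (x : Fin k → ℝ) : ℝ := Real.sqrt (∑ i, x i ^ 2)

/-- The continuous linear functional `v ↦ ⟨w, v⟩`; used to state that a function has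
gradient `w` at a point. -/
def dotCLM {k : ℕ} (w : Fin k → ℝ) : (Fin k → ℝ) →L[ℝ] ℝ :=
  LinearMap.toContinuousLinearMap
    { toFun := fun v => w ⬝ᵥ v
      map_add' := fun a b => dotProduct_add w a b
      map_smul' := fun c a => by
        simp [dotProduct, Finset.mul_sum, mul_left_comm] }

/-- The domain of the Fenchel conjugate `f*`. -/
def fenchelDom {k : ℕ} (f : (Fin k → ℝ) → ℝ) : Set (Fin k → ℝ) :=
  {z | BddAbove (Set.range fun w => w ⬝ᵥ z - f w)}

/-- The Fenchel conjugate `f*(z) = sup_w (⟨w, z⟩ - f(w))` (as a real-valued supremum,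
meaningful on `fenchelDom f`). -/
def fenchel {k : ℕ} (f : (Fin k → ℝ) → ℝ) (z : Fin k → ℝ) : ℝ :=
  ⨆ w, (w ⬝ᵥ z - f w)

/-- The subdifferential of the Fenchel conjugate `f*` at `z`. -/
def fenchelSubdiff {k : ℕ} (f : (Fin k → ℝ) → ℝ) (z : Fin k → ℝ) : Set (Fin k → ℝ) :=
  {g | ∀ y ∈ fenchelDom f, fenchel f z + g ⬝ᵥ (y - z) ≤ fenchel f y}

/-- `P` is the orthogonal projector onto the range (column space) of `S`. -/
def IsOrthProj {q m : ℕ} (S : Matrix (Fin q) (Fin m) ℝ) (P : Matrix (Fin q) (Fin q) ℝ) : Prop :=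
  Pᵀ = P ∧ P * P = P ∧ P * S = S ∧ ∃ C : Matrix (Fin m) (Fin q) ℝ, P = S * C

/-- The quantity `Z_f`: the supremum of `(Δᵀ B P⊥ Bᵀ Δ)^{1/2} / ‖Δ‖₂` over nonzero
`Δ ∈ dom f* - z*`. -/
def Zf {k q : ℕ} (f : (Fin k → ℝ) → ℝ) (B : Matrix (Fin k) (Fin q) ℝ)
    (Pperp : Matrix (Fin q) (Fin q) ℝ) (zs : Fin k → ℝ) : ℝ :=
  sSup {r | ∃ Δ : Fin k → ℝ, Δ ≠ 0 ∧ zs + Δ ∈ fenchelDom f ∧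
    r = Real.sqrt (Δ ⬝ᵥ (B * Pperp * Bᵀ).mulVec Δ) / norm2 Δ}

/-- The spectral norm (largest singular value) of a matrix. -/
def specNorm {a b : ℕ} (M : Matrix (Fin a) (Fin b) ℝ) : ℝ :=
  sSup {r | ∃ v : Fin b → ℝ, norm2 v = 1 ∧ r = norm2 (M.mulVec v)}

/-- The eigenvalues of `A * Aᵀ` (i.e. the squared singular values of `A`),
sorted in decreasing order. -/
def eigsDesc {n d : ℕ} (A : Matrix (Fin n) (Fin d) ℝ) : Fin n → ℝ := fun i =>
  ((Matrix.isHermitian_mul_conjTranspose_self A).eigenvalues ∘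
    Tuple.sort (Matrix.isHermitian_mul_conjTranspose_self A).eigenvalues) i.rev

/-- The spectral tail `R_k(A) = (σ_k² + (1/k) ∑_{j=k+1}^ρ σ_j²)^{1/2}`. -/
def Rk {n d : ℕ} (A : Matrix (Fin n) (Fin d) ℝ) (k : ℕ) : ℝ :=
  Real.sqrt ((∑ j : Fin n, if (j : ℕ) + 1 = k then eigsDesc A j else 0)
    + (1 / (k : ℝ)) * ∑ j : Fin n, if k ≤ (j : ℕ) then eigsDesc A j else 0)

/-- Product measure on `n × m` matrices with i.i.d. standard Gaussian entries. -/
def gaussMatrix (n m : ℕ) : MeasureTheory.Measure (Fin n → Fin m → ℝ) :=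
  MeasureTheory.Measure.pi fun _ => MeasureTheory.Measure.pi fun _ =>
    ProbabilityTheory.gaussianReal 0 1


/-- The largest eigenvalue (Rayleigh quotient supremum) of a symmetric matrix. -/
def eigMax {q : ℕ} (M : Matrix (Fin q) (Fin q) ℝ) : ℝ :=
  sSup {r | ∃ v : Fin q → ℝ, norm2 v = 1 ∧ r = v ⬝ᵥ M.mulVec v}

/-- The smallest eigenvalue (Rayleigh quotient infimum) of a symmetric matrix. -/
def eigMin {q : ℕ} (M : Matrix (Fin q) (Fin q) ℝ) : ℝ :=
  sInf {r | ∃ v : Fin q → ℝ, norm2 v = 1 ∧ r = v ⬝ᵥ M.mulVec v}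



section AuxLemmas

lemma dotCLM_apply (w v : Fin k → ℝ) : dotCLM w v = w ⬝ᵥ v := rfl

lemma dot_self_nonneg (x : Fin k → ℝ) : 0 ≤ x ⬝ᵥ x :=
  Finset.sum_nonneg fun i _ => mul_self_nonneg _

lemma sum_sq_eq_dot (x : Fin k → ℝ) : ∑ i, x i ^ 2 = x ⬝ᵥ x := by
  simp [dotProduct, sq]

lemma norm2_eq_sqrt_dot (x : Fin k → ℝ) : norm2 x = Real.sqrt (x ⬝ᵥ x) := by
  rw [norm2, sum_sq_eq_dot]

lemma norm2_nonneg (x : Fin k → ℝ) : 0 ≤ norm2 x := Real.sqrt_nonneg _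

lemma norm2_sq (x : Fin k → ℝ) : norm2 x ^ 2 = x ⬝ᵥ x := by
  rw [norm2_eq_sqrt_dot, Real.sq_sqrt (dot_self_nonneg x)]

lemma norm2_smul (c : ℝ) (x : Fin k → ℝ) : norm2 (c • x) = |c| * norm2 x := by
  simp only [norm2, Pi.smul_apply, smul_eq_mul, mul_pow, ← Finset.mul_sum]
  rw [Real.sqrt_mul (sq_nonneg c), Real.sqrt_sq_eq_abs]

lemma dot_le_norm2 (x y : Fin k → ℝ) : x ⬝ᵥ y ≤ norm2 x * norm2 y := by
  have h := Finset.sum_mul_sq_le_sq_mul_sq Finset.univ x y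
  calc x ⬝ᵥ y ≤ |x ⬝ᵥ y| := le_abs_self _
    _ = Real.sqrt ((x ⬝ᵥ y) ^ 2) := (Real.sqrt_sq_eq_abs _).symm
    _ ≤ Real.sqrt ((∑ i, x i ^ 2) * (∑ i, y i ^ 2)) := Real.sqrt_le_sqrt (by
        simpa [dotProduct] using h)
    _ = norm2 x * norm2 y := by
        rw [Real.sqrt_mul (Finset.sum_nonneg fun i _ => sq_nonneg _)]; rfl

lemma mulVec_dot {a b : ℕ} (M : Matrix (Fin a) (Fin b) ℝ) (x : Fin b → ℝ) (y : Fin a → ℝ) :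
    M.mulVec x ⬝ᵥ y = x ⬝ᵥ Mᵀ.mulVec y := by
  rw [Matrix.mulVec_transpose, dotProduct_comm x, ← Matrix.dotProduct_mulVec,
    dotProduct_comm]

lemma dot_mulVec_transpose {a b : ℕ} (M : Matrix (Fin a) (Fin b) ℝ) (y : Fin a → ℝ) (x : Fin b → ℝ) :
    y ⬝ᵥ M.mulVec x = Mᵀ.mulVec y ⬝ᵥ x := by
  rw [dotProduct_comm, mulVec_dot, dotProduct_comm]

lemma dot_self_eq_zero {x : Fin k → ℝ} (h : x ⬝ᵥ x = 0) : x = 0 := by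
  funext i
  have h0 := (Finset.sum_eq_zero_iff_of_nonneg
    (fun j (_ : j ∈ Finset.univ) => mul_self_nonneg (x j))).mp h i (Finset.mem_univ i)
  simpa [mul_self_eq_zero] using h0


section calc1
variable {f : (Fin k → ℝ) → ℝ} {f' : (Fin k → ℝ) → Fin k → ℝ} {μ : ℝ}

lemma path_hasDerivAt (hdiff : ∀ w, HasFDerivAt f (dotCLM (f' w)) w) (x y : Fin k → ℝ) (t : ℝ) :
    HasDerivAt (fun t : ℝ => f (x + t • (y - x))) (f' (x + t • (y - x)) ⬝ᵥ (y - x)) t := by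
  have h1 : HasDerivAt (fun t : ℝ => x + t • (y - x)) (y - x) t := by
    simpa using ((hasDerivAt_id t).smul_const (y - x)).const_add x
  have h2 := (hdiff (x + t • (y - x))).comp_hasDerivAt t h1
  exact h2

lemma descent (hdiff : ∀ w, HasFDerivAt f (dotCLM (f' w)) w)
    (hsmooth : ∀ w v, norm2 (f' w - f' v) ≤ μ * norm2 (w - v)) (hμ : 0 < μ)
    (x y : Fin k → ℝ) :
    f y ≤ f x + f' x ⬝ᵥ (y - x) + μ / 2 * ((y - x) ⬝ᵥ (y - x)) := by
  set c := f' x ⬝ᵥ (y - x) with hc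
  set n2 := (y - x) ⬝ᵥ (y - x) with hn2
  set g : ℝ → ℝ := fun t => f (x + t • (y - x)) - t * c - μ / 2 * t ^ 2 * n2 with hg
  have hgd : ∀ t : ℝ, HasDerivAt g (f' (x + t • (y - x)) ⬝ᵥ (y - x) - c - μ * t * n2) t := by
    intro t
    have h1 := path_hasDerivAt hdiff x y t
    have h2 : HasDerivAt (fun t : ℝ => t * c) c t := by simpa using (hasDerivAt_id t).mul_const c
    have h3 : HasDerivAt (fun t : ℝ => μ / 2 * t ^ 2 * n2) (μ * t * n2) t := by
      have h4 := ((hasDerivAt_pow 2 t).const_mul (μ / 2)).mul_const n2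
      exact h4.congr_deriv (by rw [show (2:ℕ) - 1 = 1 from rfl]; push_cast; ring)
    exact (h1.sub h2).sub h3
  have hderiv_nonpos : ∀ t ∈ interior (Set.Icc (0:ℝ) 1), deriv g t ≤ 0 := by
    intro t ht
    rw [interior_Icc] at ht
    rw [(hgd t).deriv]
    have hCS : (f' (x + t • (y - x)) - f' x) ⬝ᵥ (y - x)
        ≤ norm2 (f' (x + t • (y - x)) - f' x) * norm2 (y - x) := dot_le_norm2 _ _
    have hL : norm2 (f' (x + t • (y - x)) - f' x) ≤ μ * (t * norm2 (y - x)) := by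
      have := hsmooth (x + t • (y - x)) x
      have hxx : x + t • (y - x) - x = t • (y - x) := by abel
      rw [hxx, norm2_smul, abs_of_pos ht.1] at this
      linarith [this]
    have hn2' : norm2 (y - x) ^ 2 = n2 := norm2_sq _
    have hdot : (f' (x + t • (y - x)) - f' x) ⬝ᵥ (y - x)
        = f' (x + t • (y - x)) ⬝ᵥ (y - x) - c := by
      rw [sub_dotProduct]
    have hprod := mul_le_mul_of_nonneg_right hL (norm2_nonneg (y - x))
    have hn2'' : norm2 (y - x) * norm2 (y - x) = n2 := by rw [← hn2']; ring
    have heq : μ * (t * norm2 (y - x)) * norm2 (y - x) = μ * t * n2 := by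
      rw [← hn2'']; ring
    linarith [hCS, hdot, hprod, heq.le, heq.ge]
  have hanti : AntitoneOn g (Set.Icc (0:ℝ) 1) := by
    apply antitoneOn_of_deriv_nonpos (convex_Icc 0 1)
    · exact Continuous.continuousOn (by
        have : Continuous g := by
          have : Differentiable ℝ g := fun t => (hgd t).differentiableAt
          exact this.continuous
        exact this)
    · exact fun t _ => (hgd t).differentiableAt.differentiableWithinAt
    · exact hderiv_nonpos
  have h01 := hanti (Set.mem_Icc.mpr ⟨le_refl 0, zero_le_one⟩)
    (Set.mem_Icc.mpr ⟨zero_le_one, le_refl 1⟩) zero_le_one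
  have hg0 : g 0 = f x := by simp [hg]
  have hg1 : g 1 = f y - c - μ / 2 * n2 := by
    have : x + (1:ℝ) • (y - x) = y := by rw [one_smul]; abel
    simp [hg, this]
  rw [hg0, hg1] at h01
  linarith

lemma grad_ineq (hconv : ConvexOn ℝ Set.univ f)
    (hdiff : ∀ w, HasFDerivAt f (dotCLM (f' w)) w) (x y : Fin k → ℝ) :
    f x + f' x ⬝ᵥ (y - x) ≤ f y := by
  have hslope : ∀ t ∈ Set.Ioc (0:ℝ) 1,
      (f (x + t • (y - x)) - f x) / t ≤ f y - f x := by
    intro t ht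
    have h := hconv.2 (Set.mem_univ x) (Set.mem_univ y)
      (by linarith [ht.2] : (0:ℝ) ≤ 1 - t) (le_of_lt ht.1) (by ring)
    have hxy : (1 - t) • x + t • y = x + t • (y - x) := by
      rw [sub_smul, smul_sub, one_smul]; abel
    rw [hxy] at h
    simp only [smul_eq_mul] at h
    rw [div_le_iff₀ ht.1]
    nlinarith [h]
  have hd := path_hasDerivAt hdiff x y 0
  have hd0 : HasDerivAt (fun t : ℝ => f (x + t • (y - x))) (f' x ⬝ᵥ (y - x)) 0 := by
    simpa using hd
  rw [hasDerivAt_iff_tendsto_slope] at hd0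
  have htend : Filter.Tendsto (slope (fun t : ℝ => f (x + t • (y - x))) 0)
      (nhdsWithin 0 (Set.Ioi 0)) (nhds (f' x ⬝ᵥ (y - x))) := by
    apply hd0.mono_left
    apply nhdsWithin_mono
    intro t ht
    simp only [Set.mem_compl_iff, Set.mem_singleton_iff]
    exact ne_of_gt ht
  have hev : ∀ᶠ t in nhdsWithin (0:ℝ) (Set.Ioi 0),
      slope (fun t : ℝ => f (x + t • (y - x))) 0 t ≤ f y - f x := by
    have hmem : Set.Ioc (0:ℝ) 1 ∈ nhdsWithin (0:ℝ) (Set.Ioi 0) :=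
      Ioc_mem_nhdsGT_of_mem ⟨le_refl 0, zero_lt_one⟩
    filter_upwards [hmem] with t ht
    simpa [slope_def_field] using hslope t ht
  have := le_of_tendsto htend hev
  linarith

lemma coco (hconv : ConvexOn ℝ Set.univ f)
    (hdiff : ∀ w, HasFDerivAt f (dotCLM (f' w)) w)
    (hsmooth : ∀ w v, norm2 (f' w - f' v) ≤ μ * norm2 (w - v)) (hμ : 0 < μ)
    (u v : Fin k → ℝ) :
    (f' u - f' v) ⬝ᵥ (f' u - f' v) ≤ μ * ((f' u - f' v) ⬝ᵥ (u - v)) := by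
  have half : ∀ p q : Fin k → ℝ,
      f q - f p ≤ f' q ⬝ᵥ (q - p) - 1 / (2 * μ) * ((f' p - f' q) ⬝ᵥ (f' p - f' q)) := by
    intro p q
    set d := f' p - f' q with hd
    set w' := p - μ⁻¹ • d with hw'
    have h1 := grad_ineq hconv hdiff q w'
    have h2 := descent hdiff hsmooth hμ p w'
    have hw'q : w' - q = (p - q) - μ⁻¹ • d := by rw [hw']; abel
    have hw'p : w' - p = -(μ⁻¹ • d) := by rw [hw']; abel
    rw [hw'q] at h1
    rw [hw'p] at h2
    have e1 : f' q ⬝ᵥ (p - q - μ⁻¹ • d) = f' q ⬝ᵥ (p - q) - μ⁻¹ * (f' q ⬝ᵥ d) := by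
      rw [dotProduct_sub, dotProduct_smul]; simp
    have e2 : f' p ⬝ᵥ (-(μ⁻¹ • d)) = -(μ⁻¹ * (f' p ⬝ᵥ d)) := by
      rw [dotProduct_neg, dotProduct_smul]; simp
    have e3 : (-(μ⁻¹ • d)) ⬝ᵥ (-(μ⁻¹ • d)) = μ⁻¹ * μ⁻¹ * (d ⬝ᵥ d) := by
      rw [neg_dotProduct, dotProduct_neg, neg_neg, smul_dotProduct,
        dotProduct_smul]
      simp [mul_assoc]
    rw [e1] at h1
    rw [e2, e3] at h2
    have e4 : f' p ⬝ᵥ d - f' q ⬝ᵥ d = d ⬝ᵥ d := by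
      rw [hd, sub_dotProduct]
    have hμ' : μ⁻¹ * μ = 1 := inv_mul_cancel₀ (ne_of_gt hμ)
    have goal1 : f q - f p ≤ f' q ⬝ᵥ (q - p) - 1 / (2 * μ) * (d ⬝ᵥ d) := by
      have hqp : f' q ⬝ᵥ (q - p) = -(f' q ⬝ᵥ (p - q)) := by
        rw [← dotProduct_neg]; congr 1; abel
      rw [hqp]
      have expand : μ / 2 * (μ⁻¹ * μ⁻¹ * (d ⬝ᵥ d)) = 1 / (2 * μ) * (d ⬝ᵥ d) := by
        field_simp
      have e5 : μ⁻¹ * (f' p ⬝ᵥ d) - μ⁻¹ * (f' q ⬝ᵥ d) = μ⁻¹ * (d ⬝ᵥ d) := by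
        rw [← mul_sub, e4]
      have e6 : μ⁻¹ * (d ⬝ᵥ d) - 1 / (2 * μ) * (d ⬝ᵥ d) = 1 / (2 * μ) * (d ⬝ᵥ d) := by
        have hinv : μ⁻¹ = 1 / (2 * μ) + 1 / (2 * μ) := by
          rw [← add_div, inv_eq_one_div, div_eq_div_iff (ne_of_gt hμ) (by positivity)]
          ring
        rw [hinv]; ring
      linarith [h1, h2, expand, e5, e6]
    exact goal1
  have hA := half u v
  have hB := half v u
  have hsym : (f' v - f' u) ⬝ᵥ (f' v - f' u) = (f' u - f' v) ⬝ᵥ (f' u - f' v) := by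
    have : f' v - f' u = -(f' u - f' v) := by abel
    rw [this, neg_dotProduct, dotProduct_neg, neg_neg]
  rw [hsym] at hB
  set d := f' u - f' v with hd
  have hsum : 0 ≤ f' v ⬝ᵥ (v - u) + f' u ⬝ᵥ (u - v) - 1 / μ * (d ⬝ᵥ d) := by
    have h2μ : (2:ℝ) * μ ≠ 0 := by positivity
    have hhalfμ : 1 / (2 * μ) + 1 / (2 * μ) = 1 / μ := by
      rw [← add_div, div_eq_div_iff h2μ (ne_of_gt hμ)]; ring
    have hmul : 1 / (2 * μ) * (d ⬝ᵥ d) + 1 / (2 * μ) * (d ⬝ᵥ d) = 1 / μ * (d ⬝ᵥ d) := by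
      rw [← add_mul, hhalfμ]
    linarith [hA, hB, hmul.le, hmul.ge]
  have hcomb : f' v ⬝ᵥ (v - u) + f' u ⬝ᵥ (u - v) = d ⬝ᵥ (u - v) := by
    rw [hd, sub_dotProduct]
    have : f' v ⬝ᵥ (v - u) = -(f' v ⬝ᵥ (u - v)) := by
      rw [← dotProduct_neg]; congr 1; abel
    linarith [this]
  rw [hcomb] at hsum
  have := mul_le_mul_of_nonneg_left (by linarith [hsum] : 1 / μ * (d ⬝ᵥ d) ≤ d ⬝ᵥ (u - v)) (le_of_lt hμ)
  have hμ1 : μ * (1 / μ) = 1 := mul_one_div_cancel (ne_of_gt hμ)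
  calc d ⬝ᵥ d = μ * (1 / μ) * (d ⬝ᵥ d) := by rw [hμ1, one_mul]
    _ = μ * (1 / μ * (d ⬝ᵥ d)) := by ring
    _ ≤ μ * (d ⬝ᵥ (u - v)) := this

end calc1

lemma hasFDeriv_dot_self (x0 : Fin k → ℝ) :
    HasFDerivAt (fun x : Fin k → ℝ => x ⬝ᵥ x) (dotCLM ((2:ℝ) • x0)) x0 := by
  have h : ∀ i : Fin k, HasFDerivAt (fun x : Fin k → ℝ => x i * x i)
      (((2 * x0 i) : ℝ) • (ContinuousLinearMap.proj (R := ℝ) (φ := fun _ : Fin k => ℝ) i)) x0 := by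
    intro i
    have hp : HasFDerivAt (fun x : Fin k → ℝ => x i)
        (ContinuousLinearMap.proj (R := ℝ) (φ := fun _ : Fin k => ℝ) i) x0 :=
      (ContinuousLinearMap.proj (R := ℝ) (φ := fun _ : Fin k => ℝ) i).hasFDerivAt
    have hm := hp.mul hp
    refine hm.congr_fderiv ?_
    ext v
    simp [ContinuousLinearMap.proj]
    ring
  have hs := HasFDerivAt.fun_sum (fun i (_ : i ∈ Finset.univ) => h i)
  have hfun : (fun x : Fin k → ℝ => ∑ i, x i * x i) = fun x : Fin k → ℝ => x ⬝ᵥ x := by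
    funext x; simp [dotProduct]
  have hder : (∑ i : Fin k, ((2 * x0 i) : ℝ) •
      (ContinuousLinearMap.proj (R := ℝ) (φ := fun _ : Fin k => ℝ) i)) = dotCLM ((2:ℝ) • x0) := by
    ext v
    simp only [ContinuousLinearMap.coe_sum', Finset.sum_apply, ContinuousLinearMap.smul_apply,
      ContinuousLinearMap.proj_apply, smul_eq_mul, dotCLM_apply, dotProduct,
      Pi.smul_apply]
    try ring_nf
  rw [hfun, hder] at hs
  exact hs

lemma mulVec_hasFDeriv {a b : ℕ} (M : Matrix (Fin a) (Fin b) ℝ) (x0 : Fin b → ℝ) :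
    HasFDerivAt (fun x : Fin b → ℝ => M.mulVec x)
      (LinearMap.toContinuousLinearMap (Matrix.mulVecLin M)) x0 :=
  (LinearMap.toContinuousLinearMap (Matrix.mulVecLin M)).hasFDerivAt

/-- first-order condition for a global minimizer of
`x ↦ f (B x) + lam/2 * ⟨Cx, Cx⟩`. -/
lemma grad_min {n q d : ℕ} {f : (Fin n → ℝ) → ℝ} {f' : (Fin n → ℝ) → Fin n → ℝ}
    (hdiff : ∀ w, HasFDerivAt f (dotCLM (f' w)) w)
    (B : Matrix (Fin n) (Fin d) ℝ) (C : Matrix (Fin q) (Fin d) ℝ) (lam : ℝ) (x0 : Fin d → ℝ)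
    (hmin : ∀ x, f (B.mulVec x0) + lam / 2 * (C.mulVec x0 ⬝ᵥ C.mulVec x0)
      ≤ f (B.mulVec x) + lam / 2 * (C.mulVec x ⬝ᵥ C.mulVec x)) :
    Bᵀ.mulVec (f' (B.mulVec x0)) + lam • Cᵀ.mulVec (C.mulVec x0) = 0 := by
  set w := Bᵀ.mulVec (f' (B.mulVec x0)) + lam • Cᵀ.mulVec (C.mulVec x0) with hw
  -- derivative of x ↦ f (B x)
  have h1 : HasFDerivAt (fun x : Fin d → ℝ => f (B.mulVec x))
      (dotCLM (Bᵀ.mulVec (f' (B.mulVec x0)))) x0 := by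
    have hc := (hdiff (B.mulVec x0)).comp x0 (mulVec_hasFDeriv B x0)
    have : (dotCLM (f' (B.mulVec x0))).comp (LinearMap.toContinuousLinearMap (Matrix.mulVecLin B))
        = dotCLM (Bᵀ.mulVec (f' (B.mulVec x0))) := by
      ext v
      simp only [ContinuousLinearMap.comp_apply, dotCLM_apply,
        LinearMap.coe_toContinuousLinearMap', Matrix.mulVecLin_apply]
      rw [dot_mulVec_transpose]
    rw [this] at hc
    exact hc
  -- derivative of x ↦ lam/2 * ⟨Cx, Cx⟩
  have h2 : HasFDerivAt (fun x : Fin d → ℝ => lam / 2 * (C.mulVec x ⬝ᵥ C.mulVec x))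
      (dotCLM (lam • Cᵀ.mulVec (C.mulVec x0))) x0 := by
    have hd := (hasFDeriv_dot_self (C.mulVec x0)).comp x0 (mulVec_hasFDeriv C x0)
    have hc := hd.const_mul (lam / 2)
    have : (lam / 2) • ((dotCLM ((2:ℝ) • C.mulVec x0)).comp
        (LinearMap.toContinuousLinearMap (Matrix.mulVecLin C)))
        = dotCLM (lam • Cᵀ.mulVec (C.mulVec x0)) := by
      ext v
      simp only [ContinuousLinearMap.smul_apply, ContinuousLinearMap.comp_apply, dotCLM_apply,
        LinearMap.coe_toContinuousLinearMap', Matrix.mulVecLin_apply,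
        smul_dotProduct, smul_eq_mul]
      rw [dot_mulVec_transpose]
      ring
    rw [this] at hc
    exact hc
  have hobj := h1.add h2
  have hsum : dotCLM (Bᵀ.mulVec (f' (B.mulVec x0))) + dotCLM (lam • Cᵀ.mulVec (C.mulVec x0))
      = dotCLM w := by
    ext v
    simp [dotCLM_apply, hw, add_dotProduct]
  rw [hsum] at hobj
  have hlm : IsLocalMin (fun x : Fin d → ℝ =>
      f (B.mulVec x) + lam / 2 * (C.mulVec x ⬝ᵥ C.mulVec x)) x0 :=
    Filter.Eventually.of_forall hmin
  have h0 : dotCLM w = 0 := hlm.hasFDerivAt_eq_zero hobj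
  have hww : w ⬝ᵥ w = 0 := by
    have := ContinuousLinearMap.ext_iff.mp h0 w
    simpa [dotCLM_apply] using this
  exact dot_self_eq_zero hww


-- ############ new material ############

lemma norm2_zero : norm2 (0 : Fin k → ℝ) = 0 := by
  simp [norm2]

lemma norm2_pos {x : Fin k → ℝ} (hx : x ≠ 0) : 0 < norm2 x := by
  rcases lt_or_eq_of_le (norm2_nonneg x) with h | h
  · exact h
  · exfalso
    apply hx
    apply dot_self_eq_zero
    have := norm2_sq x
    rw [← this, ← h]
    simp

lemma norm2_neg (x : Fin k → ℝ) : norm2 (-x) = norm2 x := by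
  have : -x = (-1 : ℝ) • x := by funext i; simp
  rw [this, norm2_smul]; simp

lemma dot_sub_sub (p q : Fin k → ℝ) :
    (p - q) ⬝ᵥ (p - q) = p ⬝ᵥ p - 2 * (p ⬝ᵥ q) + q ⬝ᵥ q := by
  rw [sub_dotProduct, dotProduct_sub, dotProduct_sub,
    dotProduct_comm q p]
  ring

lemma proj_dot_left {q : ℕ} {P : Matrix (Fin q) (Fin q) ℝ} (hsym : Pᵀ = P) (hidem : P * P = P)
    (p r : Fin q → ℝ) : P.mulVec p ⬝ᵥ P.mulVec r = p ⬝ᵥ P.mulVec r := by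
  rw [mulVec_dot, hsym, Matrix.mulVec_mulVec, hidem]

lemma proj_pythagoras {q : ℕ} {P : Matrix (Fin q) (Fin q) ℝ} (hsym : Pᵀ = P) (hidem : P * P = P)
    (w : Fin q → ℝ) :
    w ⬝ᵥ w = P.mulVec w ⬝ᵥ P.mulVec w + (1 - P).mulVec w ⬝ᵥ (1 - P).mulVec w := by
  have hQsym : (1 - P)ᵀ = 1 - P := by rw [Matrix.transpose_sub, Matrix.transpose_one, hsym]
  have hQidem : (1 - P) * (1 - P) = 1 - P := by
    rw [Matrix.sub_mul, Matrix.mul_sub, Matrix.mul_sub, Matrix.one_mul, Matrix.one_mul,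
      Matrix.mul_one, hidem]
    abel
  rw [proj_dot_left hsym hidem, proj_dot_left hQsym hQidem, Matrix.sub_mulVec,
    Matrix.one_mulVec, dotProduct_sub]
  ring

lemma quad_eq_norm2_sq {K q : ℕ} (B : Matrix (Fin K) (Fin q) ℝ) {Q : Matrix (Fin q) (Fin q) ℝ}
    (hsym : Qᵀ = Q) (hidem : Q * Q = Q) (Δ : Fin K → ℝ) :
    Δ ⬝ᵥ (B * Q * Bᵀ).mulVec Δ = norm2 ((Q * Bᵀ).mulVec Δ) ^ 2 := by
  have h1 : (B * Q * Bᵀ).mulVec Δ = B.mulVec (Q.mulVec (Bᵀ.mulVec Δ)) := by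
    rw [Matrix.mulVec_mulVec, Matrix.mulVec_mulVec]
  rw [norm2_sq, h1, ← Matrix.mulVec_mulVec, proj_dot_left hsym hidem, dot_mulVec_transpose]

lemma mulVec_norm2_le {a b : ℕ} (M : Matrix (Fin a) (Fin b) ℝ) (v : Fin b → ℝ) :
    norm2 (M.mulVec v) ≤ Real.sqrt (∑ i, ∑ j, M i j ^ 2) * norm2 v := by
  have hrow : ∀ i, (M.mulVec v i) ^ 2 ≤ (∑ j, M i j ^ 2) * (∑ j, v j ^ 2) := by
    intro i
    have := Finset.sum_mul_sq_le_sq_mul_sq Finset.univ (fun j => M i j) v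
    simpa [Matrix.mulVec, dotProduct] using this
  have hsum : ∑ i, (M.mulVec v i) ^ 2 ≤ (∑ i, ∑ j, M i j ^ 2) * (∑ j, v j ^ 2) := by
    rw [Finset.sum_mul]
    exact Finset.sum_le_sum fun i _ => hrow i
  calc norm2 (M.mulVec v) = Real.sqrt (∑ i, (M.mulVec v i) ^ 2) := rfl
    _ ≤ Real.sqrt ((∑ i, ∑ j, M i j ^ 2) * (∑ j, v j ^ 2)) := Real.sqrt_le_sqrt hsum
    _ = Real.sqrt (∑ i, ∑ j, M i j ^ 2) * norm2 v := by
        rw [Real.sqrt_mul (x := ∑ i, ∑ j, M i j ^ 2) (Finset.sum_nonneg fun i _ => Finset.sum_nonneg fun j _ => sq_nonneg _)]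
        rfl

lemma specNorm_bddAbove {a b : ℕ} (M : Matrix (Fin a) (Fin b) ℝ) :
    BddAbove {r | ∃ v : Fin b → ℝ, norm2 v = 1 ∧ r = norm2 (M.mulVec v)} := by
  refine ⟨Real.sqrt (∑ i, ∑ j, M i j ^ 2), ?_⟩
  rintro r ⟨v, hv, rfl⟩
  have := mulVec_norm2_le M v
  rw [hv, mul_one] at this
  exact this

lemma specNorm_nonneg {a b : ℕ} (M : Matrix (Fin a) (Fin b) ℝ) : 0 ≤ specNorm M :=
  Real.sSup_nonneg fun r ⟨v, _, hr⟩ => hr ▸ norm2_nonneg _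

lemma le_specNorm {a b : ℕ} (M : Matrix (Fin a) (Fin b) ℝ) (v : Fin b → ℝ) :
    norm2 (M.mulVec v) ≤ specNorm M * norm2 v := by
  by_cases hv : v = 0
  · simp [hv, Matrix.mulVec_zero, norm2_zero]
  · have hpos := norm2_pos hv
    have hunit : norm2 ((norm2 v)⁻¹ • v) = 1 := by
      rw [norm2_smul, abs_of_pos (inv_pos.mpr hpos), inv_mul_cancel₀ (ne_of_gt hpos)]
    have hmem : norm2 (M.mulVec ((norm2 v)⁻¹ • v))
        ∈ {r | ∃ u : Fin b → ℝ, norm2 u = 1 ∧ r = norm2 (M.mulVec u)} := ⟨_, hunit, rfl⟩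
    have hle := le_csSup (specNorm_bddAbove M) hmem
    rw [Matrix.mulVec_smul, norm2_smul, abs_of_pos (inv_pos.mpr hpos)] at hle
    calc norm2 (M.mulVec v) = norm2 v * ((norm2 v)⁻¹ * norm2 (M.mulVec v)) := by
          field_simp
      _ ≤ norm2 v * specNorm M := mul_le_mul_of_nonneg_left hle (le_of_lt hpos)
      _ = specNorm M * norm2 v := mul_comm _ _


end AuxLemmas

set_option maxHeartbeats 1000000 in
/-- deterministic bound via the spectral norm: if `λ ≥ 2 μ Z_f²`, then
for any minimizer `αs` of the sketched program, the approximate solution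
`x̃ = -λ⁻¹ Aᵀ ∇f(A S αs)` satisfies `‖x̃ - x*‖₂ ≤ √(μ/(2λ)) ‖P_S^⊥ Aᵀ‖₂ ‖x*‖₂`. -/
theorem statement_3 {n d m : ℕ} (f : (Fin n → ℝ) → ℝ) (f' : (Fin n → ℝ) → Fin n → ℝ)
    (A : Matrix (Fin n) (Fin d) ℝ) (μ lam : ℝ)
    (hμ : 0 < μ) (hlam : 0 < lam)
    (hconv : ConvexOn ℝ Set.univ f)
    (hdiff : ∀ w, HasFDerivAt f (dotCLM (f' w)) w)
    (hsmooth : ∀ w v, norm2 (f' w - f' v) ≤ μ * norm2 (w - v))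
    (S : Matrix (Fin d) (Fin m) ℝ) (P : Matrix (Fin d) (Fin d) ℝ)
    (hP : IsOrthProj S P)
    (xs : Fin d → ℝ)
    (hxs : ∀ x, f (A.mulVec xs) + lam / 2 * norm2 xs ^ 2
        ≤ f (A.mulVec x) + lam / 2 * norm2 x ^ 2)
    (hZ : 2 * μ * Zf f A (1 - P) (f' (A.mulVec xs)) ^ 2 ≤ lam)
    (αs : Fin m → ℝ)
    (hαs : ∀ α, f ((A * S).mulVec αs) + lam / 2 * norm2 (S.mulVec αs) ^ 2
        ≤ f ((A * S).mulVec α) + lam / 2 * norm2 (S.mulVec α) ^ 2) :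
    norm2 (-(lam⁻¹ • Aᵀ.mulVec (f' ((A * S).mulVec αs))) - xs)
      ≤ Real.sqrt (μ / (2 * lam)) * specNorm ((1 - P) * Aᵀ) * norm2 xs := by
  obtain ⟨hPsym, hPidem, hPS, C0, hPC⟩ := hP
  set zs := f' (A.mulVec xs) with hzs
  set zt := f' ((A * S).mulVec αs) with hzt
  set xh := S.mulVec αs with hxh
  set Q : Matrix (Fin d) (Fin d) ℝ := 1 - P with hQdef
  have hQsym : Qᵀ = Q := by rw [hQdef, Matrix.transpose_sub, Matrix.transpose_one, hPsym]
  have hQidem : Q * Q = Q := by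
    rw [hQdef, Matrix.sub_mul, Matrix.mul_sub, Matrix.mul_sub, Matrix.one_mul, Matrix.one_mul,
      Matrix.mul_one, hPidem]
    abel
  -- optimality conditions
  have hE1 : Aᵀ.mulVec zs + lam • xs = 0 := by
    have h := grad_min hdiff A (1 : Matrix (Fin d) (Fin d) ℝ) lam xs (fun x => by
      have hx := hxs x
      rw [norm2_sq, norm2_sq] at hx
      simpa [Matrix.one_mulVec] using hx)
    simpa [Matrix.transpose_one, Matrix.one_mulVec] using h
  have hAzs : Aᵀ.mulVec zs = -(lam • xs) := eq_neg_of_add_eq_zero_left hE1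
  have hE2 : (A * S)ᵀ.mulVec zt + lam • Sᵀ.mulVec (S.mulVec αs) = 0 := by
    apply grad_min hdiff (A * S) S lam αs (fun α => by
      have hα := hαs α
      rw [norm2_sq, norm2_sq] at hα
      exact hα)
  have hE2' : Sᵀ.mulVec (Aᵀ.mulVec zt + lam • xh) = 0 := by
    rw [Matrix.mulVec_add, Matrix.mulVec_smul, hxh, Matrix.mulVec_mulVec,
      ← Matrix.transpose_mul]
    rw [Matrix.mulVec_mulVec] at hE2
    simpa [Matrix.mulVec_mulVec] using hE2
  have hE3 : P.mulVec (Aᵀ.mulVec zt + lam • xh) = 0 := by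
    have hPCT : P = C0ᵀ * Sᵀ := by rw [← hPsym, hPC, Matrix.transpose_mul]
    rw [hPCT, ← Matrix.mulVec_mulVec, hE2', Matrix.mulVec_zero]
  have hE4 : P.mulVec xh = xh := by
    rw [hxh, Matrix.mulVec_mulVec, hPS]
  have hPAzt : P.mulVec (Aᵀ.mulVec zt) = -(lam • xh) := by
    have h := hE3
    rw [Matrix.mulVec_add, Matrix.mulVec_smul, hE4] at h
    exact eq_neg_of_add_eq_zero_left h
  -- key vectors
  set Δ := zt - zs with hΔdef
  set w := Aᵀ.mulVec Δ with hwdef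
  have hwz : w = Aᵀ.mulVec zt + lam • xs := by
    rw [hwdef, hΔdef, Matrix.mulVec_sub, hAzs, sub_neg_eq_add]
  set u2 := P.mulVec w with hu2def
  set u1 := Q.mulVec w with hu1def
  have hu2 : u2 = lam • (P.mulVec xs - xh) := by
    rw [hu2def, hwz, Matrix.mulVec_add, Matrix.mulVec_smul, hPAzt, smul_sub]
    abel
  -- scalar quantities
  set a2 := Δ ⬝ᵥ Δ with ha2def
  set s2 := u2 ⬝ᵥ u2 with hs2def
  set t2 := u1 ⬝ᵥ u1 with ht2def
  set b2 := w ⬝ᵥ w with hb2def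
  set p2 := xs ⬝ᵥ P.mulVec xs with hp2def
  set α1 := xh ⬝ᵥ xh with hα1def
  set α3 := xs ⬝ᵥ xh with hα3def
  set m1 := xs ⬝ᵥ w with hm1def
  set r := Q.mulVec xs ⬝ᵥ u1 with hrdef
  set Zv := Zf f A Q zs with hZvdef
  set Nv := specNorm (Q * Aᵀ) with hNvdef
  set cc := norm2 (Q.mulVec xs) with hccdef
  set X := norm2 xs with hXdef
  -- identities
  have hPxsxh : P.mulVec xs ⬝ᵥ xh = α3 := by
    rw [mulVec_dot, hPsym, hE4, hα3def]
  have hxhPxs : xh ⬝ᵥ P.mulVec xs = α3 := by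
    rw [dotProduct_comm, hPxsxh]
  have hs2eq : s2 = lam ^ 2 * p2 - 2 * lam ^ 2 * α3 + lam ^ 2 * α1 := by
    rw [hs2def, hu2, smul_dotProduct, dotProduct_smul, smul_eq_mul, smul_eq_mul,
      dot_sub_sub, proj_dot_left hPsym hPidem, hPxsxh]
    rw [← hp2def, ← hα1def]
    ring
  have hxsu2 : xs ⬝ᵥ u2 = lam * p2 - lam * α3 := by
    rw [hu2, dotProduct_smul, smul_eq_mul, dotProduct_sub, ← hp2def, ← hα3def]
    ring
  have hreq : r = m1 - lam * p2 + lam * α3 := by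
    rw [hrdef, hu1def, proj_dot_left hQsym hQidem, hQdef, Matrix.sub_mulVec, Matrix.one_mulVec,
      dotProduct_sub, ← hm1def, ← hu2def, hxsu2]
    ring
  have hwxh : w ⬝ᵥ xh = lam * α3 - lam * α1 := by
    have h1 : w ⬝ᵥ xh = w ⬝ᵥ P.mulVec xh := by rw [hE4]
    rw [h1, dot_mulVec_transpose, hPsym, ← hu2def, hu2, smul_dotProduct, smul_eq_mul,
      sub_dotProduct, hPxsxh, ← hα1def]
    ring
  have hCkey : a2 ≤ μ * (lam * α3 - lam * α1 - m1) := by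
    have hco := coco hconv hdiff hsmooth hμ ((A * S).mulVec αs) (A.mulVec xs)
    rw [← hzt, ← hzs, ← hΔdef, ← ha2def] at hco
    have hAxh : (A * S).mulVec αs = A.mulVec xh := by rw [hxh, Matrix.mulVec_mulVec]
    rw [hAxh] at hco
    have hdot : Δ ⬝ᵥ (A.mulVec xh - A.mulVec xs) = lam * α3 - lam * α1 - m1 := by
      rw [← Matrix.mulVec_sub, dot_mulVec_transpose, ← hwdef, dotProduct_sub, hwxh]
      have : w ⬝ᵥ xs = m1 := by rw [dotProduct_comm, hm1def]
      rw [this]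
    rw [hdot] at hco
    exact hco
  have hKEY : lam * a2 ≤ μ * (-s2 - lam * r) := by
    have hId : -s2 - lam * r = lam * (lam * α3 - lam * α1 - m1) := by
      rw [hs2eq, hreq]; ring
    have h := mul_le_mul_of_nonneg_left hCkey (le_of_lt hlam)
    rw [hId]
    calc lam * a2 ≤ lam * (μ * (lam * α3 - lam * α1 - m1)) := h
      _ = μ * (lam * (lam * α3 - lam * α1 - m1)) := by ring
  have hb2eq : b2 = s2 + t2 := by
    rw [hb2def, hs2def, ht2def, hu2def, hu1def, hQdef]
    exact proj_pythagoras hPsym hPidem w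
  -- nonnegativity
  have ha2nn : 0 ≤ a2 := dot_self_nonneg Δ
  have ht2nn : 0 ≤ t2 := dot_self_nonneg u1
  have hs2nn : 0 ≤ s2 := dot_self_nonneg u2
  have hccnn : 0 ≤ cc := norm2_nonneg _
  have hXnn : 0 ≤ X := norm2_nonneg _
  have hNvnn : 0 ≤ Nv := specNorm_nonneg _
  have hZvnn : 0 ≤ Zv := by
    rw [hZvdef, Zf]
    exact Real.sSup_nonneg fun x ⟨Δ', h1, h2, h3⟩ =>
      h3 ▸ div_nonneg (Real.sqrt_nonneg _) (norm2_nonneg _)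
  have hZbdd : BddAbove {r0 | ∃ Δ' : Fin n → ℝ, Δ' ≠ 0 ∧ zs + Δ' ∈ fenchelDom f ∧
      r0 = Real.sqrt (Δ' ⬝ᵥ (A * Q * Aᵀ).mulVec Δ') / norm2 Δ'} := by
    refine ⟨Real.sqrt (∑ i, ∑ j, (Q * Aᵀ) i j ^ 2), ?_⟩
    rintro r0 ⟨Δ', hΔ', _, rfl⟩
    rw [quad_eq_norm2_sq A hQsym hQidem, Real.sqrt_sq (norm2_nonneg _),
      div_le_iff₀ (norm2_pos hΔ')]
    exact mulVec_norm2_le _ _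
  have hZN : Zv ≤ Nv := by
    rw [hZvdef, Zf]
    apply Real.sSup_le _ hNvnn
    rintro r0 ⟨Δ', hΔ', _, rfl⟩
    rw [quad_eq_norm2_sq A hQsym hQidem, Real.sqrt_sq (norm2_nonneg _),
      div_le_iff₀ (norm2_pos hΔ')]
    exact le_specNorm _ _
  have hccX : cc ≤ X := by
    rw [hccdef, hXdef, norm2_eq_sqrt_dot, norm2_eq_sqrt_dot]
    apply Real.sqrt_le_sqrt
    have := proj_pythagoras hPsym hPidem xs
    rw [← hQdef] at this
    have hP2 : 0 ≤ P.mulVec xs ⬝ᵥ P.mulVec xs := dot_self_nonneg _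
    linarith
  -- final bound on b2
  have hmain : b2 ≤ lam * μ / 2 * (Zv * cc) ^ 2 := by
    by_cases hΔ0 : Δ = 0
    · have hw0 : w = 0 := by rw [hwdef, hΔ0, Matrix.mulVec_zero]
      have : b2 = 0 := by rw [hb2def, hw0]; simp
      rw [this]
      positivity
    · -- Zf bound
      have hdom : zs + Δ ∈ fenchelDom f := by
        have : zs + Δ = zt := by rw [hΔdef]; abel
        rw [this, fenchelDom]
        refine ⟨zt ⬝ᵥ ((A * S).mulVec αs) - f ((A * S).mulVec αs), ?_⟩
        rintro y ⟨w0, rfl⟩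
        have hgi := grad_ineq hconv hdiff ((A * S).mulVec αs) w0
        rw [← hzt] at hgi
        have hIC : zt ⬝ᵥ (w0 - (A * S).mulVec αs)
            = zt ⬝ᵥ w0 - zt ⬝ᵥ ((A * S).mulVec αs) := dotProduct_sub _ _ _
        have hc : w0 ⬝ᵥ zt = zt ⬝ᵥ w0 := dotProduct_comm _ _
        simp only []
        linarith [hgi, hIC.le, hIC.ge, hc.le, hc.ge]
      have hquad : Δ ⬝ᵥ (A * Q * Aᵀ).mulVec Δ = t2 := by
        rw [quad_eq_norm2_sq A hQsym hQidem, norm2_sq, ← Matrix.mulVec_mulVec,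
          ← hwdef, ← hu1def, ← ht2def]
      have hmem : Real.sqrt (Δ ⬝ᵥ (A * Q * Aᵀ).mulVec Δ) / norm2 Δ
          ∈ {r0 | ∃ Δ' : Fin n → ℝ, Δ' ≠ 0 ∧ zs + Δ' ∈ fenchelDom f ∧
            r0 = Real.sqrt (Δ' ⬝ᵥ (A * Q * Aᵀ).mulVec Δ') / norm2 Δ'} := ⟨Δ, hΔ0, hdom, rfl⟩
      have hZle := le_csSup hZbdd hmem
      rw [hquad] at hZle
      have hZle' : Real.sqrt t2 / norm2 Δ ≤ Zv := hZle
      have hnΔ : norm2 Δ = Real.sqrt a2 := by rw [norm2_eq_sqrt_dot, ha2def]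
      have hnΔpos : 0 < norm2 Δ := norm2_pos hΔ0
      have hZt : Real.sqrt t2 ≤ Zv * Real.sqrt a2 := by
        rw [div_le_iff₀ hnΔpos] at hZle'
        rw [← hnΔ]
        exact hZle'
      have e_t2 : Real.sqrt t2 ^ 2 = t2 := Real.sq_sqrt ht2nn
      have e_a2 : Real.sqrt a2 ^ 2 = a2 := Real.sq_sqrt ha2nn
      have h7 : t2 ≤ Zv ^ 2 * a2 := by
        calc t2 = Real.sqrt t2 ^ 2 := e_t2.symm
          _ ≤ (Zv * Real.sqrt a2) ^ 2 := pow_le_pow_left₀ (Real.sqrt_nonneg t2) hZt 2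
          _ = Zv ^ 2 * a2 := by rw [mul_pow, e_a2]
      have h8 : μ * t2 ≤ lam / 2 * a2 := by
        have h1 : μ * t2 ≤ μ * (Zv ^ 2 * a2) := mul_le_mul_of_nonneg_left h7 (le_of_lt hμ)
        have h2 : 2 * μ * Zv ^ 2 * a2 ≤ lam * a2 := mul_le_mul_of_nonneg_right hZ ha2nn
        linarith [h1, h2]
      have hrle : -r ≤ cc * Real.sqrt t2 := by
        have h := dot_le_norm2 (-(Q.mulVec xs)) u1
        rw [neg_dotProduct, norm2_neg, ← hrdef, ← hccdef] at h
        have hn : norm2 u1 = Real.sqrt t2 := by rw [norm2_eq_sqrt_dot, ht2def]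
        rw [hn] at h
        exact h
      have hs2le : μ * s2 ≤ -(μ * lam * r) - lam * a2 := by linarith [hKEY]
      have hrle2 : -(μ * lam * r) ≤ μ * lam * (cc * Real.sqrt t2) := by
        have h := mul_le_mul_of_nonneg_left hrle (by positivity : (0:ℝ) ≤ μ * lam)
        linarith [h]
      have hrle3 : μ * lam * (cc * Real.sqrt t2) ≤ μ * lam * (cc * (Zv * Real.sqrt a2)) := by
        apply mul_le_mul_of_nonneg_left _ (by positivity : (0:ℝ) ≤ μ * lam)
        exact mul_le_mul_of_nonneg_left hZt hccnn
      have hμb2 : μ * b2 ≤ μ * lam * (cc * (Zv * Real.sqrt a2)) - lam / 2 * a2 := by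
        have hb2' : μ * b2 = μ * s2 + μ * t2 := by rw [hb2eq]; ring
        linarith [hs2le, hrle2, hrle3, h8]
      have hAM : μ * lam * (cc * (Zv * Real.sqrt a2))
          ≤ lam / 2 * a2 + lam / 2 * μ ^ 2 * Zv ^ 2 * cc ^ 2 := by
        have hsq := mul_nonneg (by positivity : (0:ℝ) ≤ lam / 2)
          (sq_nonneg (Real.sqrt a2 - μ * (Zv * cc)))
        have hexp : lam / 2 * (Real.sqrt a2 - μ * (Zv * cc)) ^ 2
            = lam / 2 * a2 - μ * lam * (cc * (Zv * Real.sqrt a2))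
              + lam / 2 * μ ^ 2 * Zv ^ 2 * cc ^ 2 := by
          have hx : (Real.sqrt a2 - μ * (Zv * cc)) ^ 2
              = Real.sqrt a2 ^ 2 - 2 * (μ * (Zv * cc)) * Real.sqrt a2 + (μ * (Zv * cc)) ^ 2 := by
            ring
          rw [hx, e_a2]; ring
        linarith [hsq, hexp]
      have hfin : μ * b2 ≤ lam / 2 * μ ^ 2 * Zv ^ 2 * cc ^ 2 := by linarith
      have : μ * b2 ≤ μ * (lam * μ / 2 * (Zv * cc) ^ 2) := by
        have hx : μ * (lam * μ / 2 * (Zv * cc) ^ 2) = lam / 2 * μ ^ 2 * Zv ^ 2 * cc ^ 2 := by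
          ring
        linarith [hfin, hx.le, hx.ge]
      exact le_of_mul_le_mul_left this hμ
  -- convert to the stated goal
  have hvec : -(lam⁻¹ • Aᵀ.mulVec zt) - xs = -(lam⁻¹ • w) := by
    rw [hwz, smul_add, smul_smul, inv_mul_cancel₀ (ne_of_gt hlam), one_smul, neg_add]
    abel
  rw [hvec, norm2_neg, norm2_smul, abs_of_pos (inv_pos.mpr hlam)]
  have hnw : norm2 w = Real.sqrt b2 := by rw [norm2_eq_sqrt_dot, hb2def]
  rw [hnw]
  have hsqb : Real.sqrt b2 ≤ Real.sqrt (lam * μ / 2) * (Zv * cc) := by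
    have h := Real.sqrt_le_sqrt hmain
    rw [Real.sqrt_mul (by positivity : (0:ℝ) ≤ lam * μ / 2), Real.sqrt_sq
      (mul_nonneg hZvnn hccnn)] at h
    exact h
  have hZcNX : Zv * cc ≤ Nv * X := mul_le_mul hZN hccX hccnn hNvnn
  have hchain : Real.sqrt b2 ≤ Real.sqrt (lam * μ / 2) * (Nv * X) := by
    calc Real.sqrt b2 ≤ Real.sqrt (lam * μ / 2) * (Zv * cc) := hsqb
      _ ≤ Real.sqrt (lam * μ / 2) * (Nv * X) :=
          mul_le_mul_of_nonneg_left hZcNX (Real.sqrt_nonneg _)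
  have hscal : Real.sqrt (μ / (2 * lam)) = lam⁻¹ * Real.sqrt (lam * μ / 2) := by
    have h1 : μ / (2 * lam) = lam * μ / 2 * (lam⁻¹) ^ 2 := by
      field_simp
    rw [h1, Real.sqrt_mul (by positivity : (0:ℝ) ≤ lam * μ / 2), Real.sqrt_sq
      (by positivity : (0:ℝ) ≤ lam⁻¹)]
    ring
  rw [hscal]
  calc lam⁻¹ * Real.sqrt b2 ≤ lam⁻¹ * (Real.sqrt (lam * μ / 2) * (Nv * X)) :=
        mul_le_mul_of_nonneg_left hchain (by positivity)
    _ = lam⁻¹ * Real.sqrt (lam * μ / 2) * Nv * X := by ring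


end Sketch
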